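/- Let α > 0 and β, γ ∈ ℝ. Define the complex numbers a := −( 3((1+2i) − (1+i)√2)·α·γ + ((6+8i) − (4+4i)√2)·β² ) / ( ((4+8i) − (4+4i)√2)·α ) and b := ((1+i)/2)·α, and define μ₂ := (1/√α)·( (β²/α)·(1/3 − 1/(2√2)) − (3/(4√2))·γ ). Then −2·Re(a·conj(b))/|b|² < 0 if and only if μ₂ > 0, and −2·Re(a·conj(b))/|b|² > 0 if and only if μ₂ < 0. -/

import Mathlib

/-- The sign of the nontrivial Floquet exponent coefficient
`−2Re(a·conj b)/|b|²` is opposite to the sign of the branching coefficient `μ₂`: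
supercritical branches (`μ₂ > 0`) are spectrally stable, subcritical ones
(`μ₂ < 0`) unstable. -/
theorem stmt_18 (α β γ : ℝ) (hα : 0 < α) :
    let a : ℂ := -((3*((1 + 2*Complex.I) - (1 + Complex.I)*(Real.sqrt 2 : ℂ)) * α * γ
        + ((6 + 8*Complex.I) - (4 + 4*Complex.I)*(Real.sqrt 2 : ℂ)) * (β:ℂ)^2)
        / ((((4 + 8*Complex.I) - (4 + 4*Complex.I)*(Real.sqrt 2 : ℂ))) * α))
    let b : ℂ := ((1 + Complex.I)/2) * α
    let μ₂ : ℝ := (1/Real.sqrt α) * ((β^2/α) * (1/3 - 1/(2*Real.sqrt 2))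
      - (3/(4*Real.sqrt 2)) * γ)
    (-2 * (a * (starRingEnd ℂ) b).re / ‖b‖ ^ 2 < 0 ↔ 0 < μ₂) ∧
    (0 < -2 * (a * (starRingEnd ℂ) b).re / ‖b‖ ^ 2 ↔ μ₂ < 0) := by
  intro a b μ₂
  have hs2 : Real.sqrt 2 ^ 2 = 2 := Real.sq_sqrt (by norm_num)
  have hs0 : 0 < Real.sqrt 2 := Real.sqrt_pos.mpr (by norm_num)
  have hT : 0 < 3 - 2*Real.sqrt 2 := by nlinarith [Real.sqrt_nonneg 2]
  have hsa : 0 < Real.sqrt α := Real.sqrt_pos.mpr hα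
  have hsa2 : Real.sqrt α * Real.sqrt α = α := Real.mul_self_sqrt hα.le
  have hre : (a * (starRingEnd ℂ) b).re
      = -(36*(3-2*Real.sqrt 2)*α*γ + (136-96*Real.sqrt 2)*β^2)/(96*(3-2*Real.sqrt 2)) := by
    simp only [a, b, Complex.div_re, Complex.div_im, Complex.normSq_apply, map_mul, map_div₀,
      map_sub, map_add, map_one, map_ofNat, Complex.conj_I, Complex.conj_ofReal]
    simp [Complex.div_re, Complex.div_im, Complex.normSq_apply, ← Complex.ofReal_pow]
    have hd : ((4 - 4 * Real.sqrt 2) * α * ((4 - 4 * Real.sqrt 2) * α)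
        + (8 - 4 * Real.sqrt 2) * α * ((8 - 4 * Real.sqrt 2) * α)) ≠ 0 := by
      nlinarith [hs2, sq_nonneg α, mul_pos hα hα]
    have hd'' : (4:ℝ)^2*(1-Real.sqrt 2)^2 + (8-Real.sqrt 2*4)^2 ≠ 0 := by
      nlinarith [hs2, sq_nonneg (1-Real.sqrt 2)]
    have hd' : (3 - 2*Real.sqrt 2) ≠ 0 := hT.ne'
    field_simp
    linear_combination (-512*β^2) * hs2
  have habs : ‖b‖ ^ 2 = α^2/2 := by
    simp only [b, Complex.sq_norm, Complex.normSq_apply]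
    simp [Complex.div_re, Complex.div_im]
    ring
  have h1 : -(2*Real.sqrt 2/Real.sqrt α) * μ₂
      = -(2*Real.sqrt 2/α) * ((β^2/α) * (1/3 - 1/(2*Real.sqrt 2)) - (3/(4*Real.sqrt 2)) * γ) := by
    simp only [μ₂]
    rw [← hsa2]
    field_simp
    rw [Real.sqrt_sq hsa.le]
  have key : -2 * (a * (starRingEnd ℂ) b).re / ‖b‖ ^ 2
      = -(2*Real.sqrt 2/Real.sqrt α) * μ₂ := by
    rw [hre, habs, h1]
    field_simp
    linear_combination (-1536*β^2) * hs2
  rw [key]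
  have hc : 0 < 2*Real.sqrt 2/Real.sqrt α := by positivity
  constructor
  · constructor
    · intro h; nlinarith
    · intro h; nlinarith
  · constructor
    · intro h; nlinarith
    · intro h; nlinarith
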